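/- arXiv:2208.04463 — 8 statements merged into one kernel-verified Lean document; each statement's English description precedes it below -/
import Mathlib

section
/- Let R = R₀ ⊕ R₁ be a strongly Z₂-graded commutative ring (i.e. R₁² = R₀). Then R₁ is a multiplication R₀-module: every R₀-submodule R' of R₁ satisfies R' = (R' :_{R₀} R₁)·R₁. -/
/-- A `ℤ/2ℤ`-grading on a commutative ring `R`: additive subgroups `R0`, `R1` with
`R = R0 ⊕ R1` (internal direct sum) and `Rᵢ · Rⱼ ⊆ R_{i+j}`. -/
structure Z2Grading (R : Type*) [CommRing R] where
  R0 : AddSubgroup R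
  R1 : AddSubgroup R
  one_mem : (1 : R) ∈ R0
  mul_mem_00 : ∀ {a b : R}, a ∈ R0 → b ∈ R0 → a * b ∈ R0
  mul_mem_01 : ∀ {a b : R}, a ∈ R0 → b ∈ R1 → a * b ∈ R1
  mul_mem_11 : ∀ {a b : R}, a ∈ R1 → b ∈ R1 → a * b ∈ R0
  sup_eq_top : R0 ⊔ R1 = ⊤
  inf_eq_bot : R0 ⊓ R1 = ⊥

/-- The sum `S + T` of two subsets of `R`. -/
def setSum {R : Type*} [CommRing R] (S T : Set R) : Set R :=
  {z : R | ∃ a ∈ S, ∃ b ∈ T, z = a + b}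

/-- The additive subgroup of `R` generated by the pairwise products of `S` and `T`
(i.e. the product `S·T` of an ideal/submodule pair). -/
def mulSet {R : Type*} [CommRing R] (S T : Set R) : AddSubgroup R :=
  AddSubgroup.closure {x : R | ∃ a ∈ S, ∃ b ∈ T, x = a * b}

namespace Z2Grading

variable {R : Type*} [CommRing R] (G : Z2Grading R)

/-- The set of homogeneous elements of `R`, namely `R₀ ∪ R₁`. -/
def homogeneous : Set R := ↑G.R0 ∪ ↑G.R1

/-- `R₁²`, the ideal of `R₀` generated by the products of two elements of `R₁`. -/
def sq : AddSubgroup R := mulSet (↑G.R1) (↑G.R1)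

/-- `R₁³ = R₁² · R₁`, an `R₀`-submodule of `R₁`. -/
def cube : AddSubgroup R := mulSet (↑G.sq) (↑G.R1)

/-- `I` is an ideal of the subring `R₀` (viewed inside `R`). -/
def IsIdeal0 (I : AddSubgroup R) : Prop :=
  (I : Set R) ⊆ ↑G.R0 ∧ ∀ a ∈ G.R0, ∀ x ∈ I, a * x ∈ I

/-- `N` is an `R₀`-submodule of `R₁` (viewed inside `R`). -/
def IsSubmodule1 (N : AddSubgroup R) : Prop :=
  (N : Set R) ⊆ ↑G.R1 ∧ ∀ a ∈ G.R0, ∀ x ∈ N, a * x ∈ N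

/-- The residual `(N :_{R₀} R₁) = {a ∈ R₀ : a·R₁ ⊆ N}`. -/
def residual (N : AddSubgroup R) : AddSubgroup R where
  carrier := {a : R | a ∈ G.R0 ∧ ∀ r ∈ G.R1, a * r ∈ N}
  zero_mem' := ⟨G.R0.zero_mem, fun r _ => by simpa using N.zero_mem⟩
  add_mem' := by
    rintro a b ⟨ha0, ha⟩ ⟨hb0, hb⟩
    exact ⟨G.R0.add_mem ha0 hb0, fun r hr => by
      rw [add_mul]; exact N.add_mem (ha r hr) (hb r hr)⟩
  neg_mem' := by
    rintro a ⟨ha0, ha⟩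
    exact ⟨G.R0.neg_mem ha0, fun r hr => by
      rw [neg_mul]; exact N.neg_mem (ha r hr)⟩

/-- `J` is a `ℤ₂`-graded ideal of `R`: the homogeneous components of each of its
elements again belong to `J`, i.e. `J = (J ∩ R₀) ⊕ (J ∩ R₁)`. -/
def IsGradedIdeal (J : Ideal R) : Prop :=
  ∀ x ∈ J, ∃ a b : R, a ∈ G.R0 ∧ b ∈ G.R1 ∧ a ∈ J ∧ b ∈ J ∧ x = a + b

/-- `J` is a `ℤ₂`-graded prime ideal of `R`. -/
def IsGradedPrime (J : Ideal R) : Prop :=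
  G.IsGradedIdeal J ∧ J ≠ ⊤ ∧
    ∀ r ∈ G.homogeneous, ∀ s ∈ G.homogeneous, r * s ∈ J → r ∈ J ∨ s ∈ J

/-- `J` is a `ℤ₂`-graded maximal ideal of `R`. -/
def IsGradedMaximal (J : Ideal R) : Prop :=
  G.IsGradedIdeal J ∧ J ≠ ⊤ ∧
    ∀ J' : Ideal R, G.IsGradedIdeal J' → J ≤ J' → J' = J ∨ J' = ⊤

/-- `p` is a prime ideal of the subring `R₀`. -/
def IsPrime0 (p : AddSubgroup R) : Prop :=
  G.IsIdeal0 p ∧ (p : Set R) ≠ ↑G.R0 ∧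
    ∀ a ∈ G.R0, ∀ b ∈ G.R0, a * b ∈ p → a ∈ p ∨ b ∈ p

/-- `p` is a maximal ideal of the subring `R₀`. -/
def IsMaximal0 (p : AddSubgroup R) : Prop :=
  G.IsIdeal0 p ∧ (p : Set R) ≠ ↑G.R0 ∧
    ∀ I : AddSubgroup R, G.IsIdeal0 I → p ≤ I → (I : Set R) = ↑p ∨ (I : Set R) = ↑G.R0

/-- `N` is a prime `R₀`-submodule of `R₁`. -/
def IsPrimeSubmodule1 (N : AddSubgroup R) : Prop :=
  G.IsSubmodule1 N ∧ (N : Set R) ≠ ↑G.R1 ∧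
    ∀ a ∈ G.R0, ∀ m ∈ G.R1, a * m ∈ N → a ∈ G.residual N ∨ m ∈ N

/-- `N` is a maximal (proper) `R₀`-submodule of `R₁`. -/
def IsMaximalSubmodule1 (N : AddSubgroup R) : Prop :=
  G.IsSubmodule1 N ∧ (N : Set R) ≠ ↑G.R1 ∧
    ∀ N' : AddSubgroup R, G.IsSubmodule1 N' → N ≤ N' →
      (N' : Set R) = ↑N ∨ (N' : Set R) = ↑G.R1

/-- `R` is a `ℤ₂`-graded integral domain. -/
def IsGradedDomain : Prop :=
  (1 : R) ≠ 0 ∧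
    ∀ r ∈ G.homogeneous, ∀ s ∈ G.homogeneous, r * s = 0 → r = 0 ∨ s = 0

/-- `R` is a `ℤ₂`-graded field. -/
def IsGradedField : Prop :=
  (1 : R) ≠ 0 ∧ ∀ r ∈ G.homogeneous, r ≠ 0 → IsUnit r

/-- `R₀` as a subring of `R`. -/
def toSubring : Subring R where
  carrier := ↑G.R0
  one_mem' := G.one_mem
  mul_mem' := fun ha hb => G.mul_mem_00 ha hb
  zero_mem' := G.R0.zero_mem
  add_mem' := fun ha hb => G.R0.add_mem ha hb
  neg_mem' := fun ha => G.R0.neg_mem ha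

/-- The Zariski topology on the homogeneous spectrum `Z₂Spec R`: closed sets are the
`V(I) = {P : I ⊆ P}` for `ℤ₂`-graded ideals `I`. -/
def gradedZariski : TopologicalSpace {Q : Ideal R // G.IsGradedPrime Q} :=
  TopologicalSpace.generateFrom
    {U : Set {Q : Ideal R // G.IsGradedPrime Q} |
      ∃ I : Ideal R, G.IsGradedIdeal I ∧ U = {P | ¬ I ≤ P.1}}

end Z2Grading

/-- if `R` is strongly `ℤ₂`-graded (`R₁² = R₀`) then `R₁` is a multiplication
`R₀`-module: every `R₀`-submodule `R'` of `R₁` satisfies `R' = (R' :_{R₀} R₁)·R₁`. -/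
theorem multiplication_module_of_strongly_graded {R : Type*} [CommRing R] (G : Z2Grading R)
    (hstr : (G.sq : Set R) = ↑G.R0) :
    ∀ N : AddSubgroup R, G.IsSubmodule1 N → N = mulSet (↑(G.residual N)) (↑G.R1) := by
  intro N hN
  obtain ⟨hN1, hNmod⟩ := hN
  apply le_antisymm
  · intro x hx
    have h1 : (1 : R) ∈ G.sq := by
      have : (1 : R) ∈ (G.sq : Set R) := by rw [hstr]; exact G.one_mem
      exact this
    have key : G.sq ≤ (mulSet (↑(G.residual N)) (↑G.R1)).comap (AddMonoidHom.mulLeft x) := by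
      rw [Z2Grading.sq, mulSet, AddSubgroup.closure_le]
      rintro u ⟨b, hb, c, hc, rfl⟩
      simp only [AddSubgroup.coe_comap, Set.mem_preimage, AddMonoidHom.coe_mulLeft]
      have hx1 : x ∈ G.R1 := hN1 hx
      have he : x * (b * c) = (c * x) * b := by ring
      rw [he]
      apply AddSubgroup.subset_closure
      refine ⟨c * x, ⟨G.mul_mem_11 hc hx1, fun r hr => ?_⟩, b, hb, rfl⟩
      have he2 : (c * x) * r = (c * r) * x := by ring
      rw [he2]
      exact hNmod _ (G.mul_mem_11 hc hr) _ hx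
    have := key h1
    simpa using this
  · rw [mulSet, AddSubgroup.closure_le]
    rintro u ⟨a, ha, b, hb, rfl⟩
    exact ha.2 b hb
end

section
/- Let R = R₀ ⊕ R₁ be a Z₂-graded commutative ring and Q a Z₂-graded ideal of R. Then Q is a Z₂-graded prime ideal of R if and only if either (1) Q = p + R₁ where p is a prime ideal of R₀ containing R₁², or (2) Q = (R' :_{R₀} R₁) + R' where R' is a prime R₀-submodule of R₁ with R₁³ ⊄ R'. -/
namespace Z2Grading

variable {R : Type*} [CommRing R] (G : Z2Grading R)

lemma eq_zero_of_mem_both {x : R} (h0 : x ∈ G.R0) (h1 : x ∈ G.R1) : x = 0 := by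
  have h : x ∈ G.R0 ⊓ G.R1 := ⟨h0, h1⟩
  rw [G.inf_eq_bot] at h
  simpa using h

lemma mem_residual' {N : AddSubgroup R} {a : R} :
    a ∈ G.residual N ↔ a ∈ G.R0 ∧ ∀ r ∈ G.R1, a * r ∈ N := Iff.rfl

lemma sq_le_R0 : G.sq ≤ G.R0 := by
  apply (AddSubgroup.closure_le _).mpr
  rintro x ⟨a, ha, b, hb, rfl⟩
  exact G.mul_mem_11 ha hb

end Z2Grading

/-- a `ℤ₂`-graded ideal `Q` is `ℤ₂`-graded prime iff either `Q = p + R₁` with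
`p` a prime ideal of `R₀` containing `R₁²`, or `Q = (R' :_{R₀} R₁) + R'` with `R'` a prime
`R₀`-submodule of `R₁` such that `R₁³ ⊄ R'`. -/
theorem graded_prime_iff {R : Type*} [CommRing R] (G : Z2Grading R) (Q : Ideal R)
    (hQ : G.IsGradedIdeal Q) :
    G.IsGradedPrime Q ↔
      (∃ p : AddSubgroup R, G.IsPrime0 p ∧ (G.sq : Set R) ⊆ ↑p ∧
        (Q : Set R) = setSum ↑p ↑G.R1) ∨
      (∃ N : AddSubgroup R, G.IsPrimeSubmodule1 N ∧ ¬ ((G.cube : Set R) ⊆ ↑N) ∧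
        (Q : Set R) = setSum ↑(G.residual N) ↑N) := by
  constructor
  · rintro ⟨-, hne, hpr⟩
    by_cases hR1 : (G.R1 : Set R) ⊆ ↑Q
    · -- Case 1 : R₁ ⊆ Q
      refine Or.inl ⟨Q.toAddSubgroup ⊓ G.R0, ⟨⟨?_, ?_⟩, ?_, ?_⟩, ?_, ?_⟩
      · intro x hx
        exact hx.2
      · intro a ha x hx
        exact ⟨Q.mul_mem_left a hx.1, G.mul_mem_00 ha hx.2⟩
      · intro h
        have h1 : (1 : R) ∈ (↑(Q.toAddSubgroup ⊓ G.R0) : Set R) := by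
          rw [h]; exact G.one_mem
        exact hne (Q.eq_top_of_isUnit_mem h1.1 isUnit_one)
      · intro a ha b hb hab
        rcases hpr a (Or.inl ha) b (Or.inl hb) hab.1 with h | h
        · exact Or.inl ⟨h, ha⟩
        · exact Or.inr ⟨h, hb⟩
      · intro x hx
        refine (AddSubgroup.closure_le _).mpr ?_ hx
        rintro y ⟨a, ha, b, hb, rfl⟩
        exact ⟨Q.mul_mem_left a (hR1 hb), G.mul_mem_11 ha hb⟩
      · ext x
        constructor
        · intro hx
          obtain ⟨a, b, ha0, hb1, haQ, hbQ, hxab⟩ := hQ x hx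
          exact ⟨a, ⟨haQ, ha0⟩, b, hb1, hxab⟩
        · rintro ⟨a, ha, b, hb, rfl⟩
          exact Q.add_mem ha.1 (hR1 hb)
    · -- Case 2 : R₁ ⊄ Q
      rw [Set.not_subset] at hR1
      obtain ⟨t, ht1, htQ⟩ := hR1
      set N : AddSubgroup R := Q.toAddSubgroup ⊓ G.R1 with hN
      have hNsub : G.IsSubmodule1 N := by
        refine ⟨fun x hx => hx.2, fun a ha x hx => ⟨Q.mul_mem_left a hx.1, G.mul_mem_01 ha hx.2⟩⟩
      have hresQ : ∀ a, a ∈ G.residual N → a ∈ Q := by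
        intro a haN
        have hat : a * t ∈ Q := (haN.2 t ht1).1
        rcases hpr a (Or.inl haN.1) t (Or.inr ht1) hat with h | h
        · exact h
        · exact absurd h htQ
      have hQres : ∀ a, a ∈ Q → a ∈ G.R0 → a ∈ G.residual N := by
        intro a haQ ha0
        exact ⟨ha0, fun r hr => ⟨Q.mul_mem_right r haQ, G.mul_mem_01 ha0 hr⟩⟩
      refine Or.inr ⟨N, ⟨hNsub, ?_, ?_⟩, ?_, ?_⟩
      · intro h
        exact htQ ((show t ∈ (↑N : Set R) by rw [h]; exact ht1)).1
      · intro a ha m hm hamN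
        rcases hpr a (Or.inl ha) m (Or.inr hm) hamN.1 with h | h
        · exact Or.inl (hQres a h ha)
        · exact Or.inr ⟨h, hm⟩
      · intro hcube
        have htt : t * t ∈ G.sq := AddSubgroup.subset_closure ⟨t, ht1, t, ht1, rfl⟩
        have httt : t * t * t ∈ N := hcube (AddSubgroup.subset_closure ⟨t * t, htt, t, ht1, rfl⟩)
        rcases hpr (t * t) (Or.inl (G.mul_mem_11 ht1 ht1)) t (Or.inr ht1) httt.1 with h | h
        · rcases hpr t (Or.inr ht1) t (Or.inr ht1) h with h' | h' <;> exact htQ h'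
        · exact htQ h
      · ext x
        constructor
        · intro hx
          obtain ⟨a, b, ha0, hb1, haQ, hbQ, hxab⟩ := hQ x hx
          exact ⟨a, hQres a haQ ha0, b, ⟨hbQ, hb1⟩, hxab⟩
        · rintro ⟨a, ha, b, hb, rfl⟩
          exact Q.add_mem (hresQ a ha) hb.1
  · rintro (⟨p, ⟨⟨hpR0, hpmul⟩, hpne, hpprime⟩, hsqp, hQeq⟩ |
      ⟨N, ⟨⟨hNR1, hNmul⟩, hNne, hNprime⟩, hcube, hQeq⟩)
    · -- Case 1
      have hmemQ : ∀ x : R, x ∈ Q ↔ ∃ a ∈ p, ∃ b ∈ G.R1, x = a + b := by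
        intro x
        rw [← SetLike.mem_coe, hQeq]; rfl
      have hpQ : ∀ a ∈ p, a ∈ Q := fun a ha =>
        (hmemQ a).mpr ⟨a, ha, 0, G.R1.zero_mem, (add_zero a).symm⟩
      have hR1Q : ∀ b ∈ G.R1, b ∈ Q := fun b hb =>
        (hmemQ b).mpr ⟨0, p.zero_mem, b, hb, (zero_add b).symm⟩
      have hQ0 : ∀ x ∈ Q, x ∈ G.R0 → x ∈ p := by
        intro x hx hx0
        obtain ⟨a, ha, b, hb, rfl⟩ := (hmemQ x).mp hx
        have hb0 : b ∈ G.R0 := by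
          have : (a + b) - a ∈ G.R0 := G.R0.sub_mem hx0 (hpR0 ha)
          simpa using this
        have : b = 0 := G.eq_zero_of_mem_both hb0 hb
        simpa [this] using ha
      refine ⟨hQ, ?_, ?_⟩
      · intro hTop
        have h1 : (1 : R) ∈ p := hQ0 1 (hTop ▸ Submodule.mem_top) G.one_mem
        apply hpne
        refine Set.Subset.antisymm hpR0 ?_
        intro a ha
        have := hpmul a ha 1 h1
        simpa using this
      · rintro r hr s hs hrs
        rcases hs with hs0 | hs1
        · rcases hr with hr0 | hr1
          · have : r * s ∈ p := hQ0 _ hrs (G.mul_mem_00 hr0 hs0)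
            rcases hpprime r hr0 s hs0 this with h | h
            · exact Or.inl (hpQ r h)
            · exact Or.inr (hpQ s h)
          · exact Or.inl (hR1Q r hr1)
        · exact Or.inr (hR1Q s hs1)
    · -- Case 2
      have hresR0 : ∀ a, a ∈ G.residual N → a ∈ G.R0 := fun a ha => ha.1
      have hmemQ : ∀ x : R, x ∈ Q ↔ ∃ a ∈ G.residual N, ∃ b ∈ N, x = a + b := by
        intro x
        rw [← SetLike.mem_coe, hQeq]; rfl
      have hresQ : ∀ a ∈ G.residual N, a ∈ Q := fun a ha =>
        (hmemQ a).mpr ⟨a, ha, 0, N.zero_mem, (add_zero a).symm⟩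
      have hNQ : ∀ b ∈ N, b ∈ Q := fun b hb =>
        (hmemQ b).mpr ⟨0, (G.residual N).zero_mem, b, hb, (zero_add b).symm⟩
      have hQ0 : ∀ x ∈ Q, x ∈ G.R0 → x ∈ G.residual N := by
        intro x hx hx0
        obtain ⟨a, ha, b, hb, rfl⟩ := (hmemQ x).mp hx
        have hb0 : b ∈ G.R0 := by
          have : (a + b) - a ∈ G.R0 := G.R0.sub_mem hx0 (hresR0 a ha)
          simpa using this
        have : b = 0 := G.eq_zero_of_mem_both hb0 (hNR1 hb)
        simpa [this] using ha
      have hQ1 : ∀ x ∈ Q, x ∈ G.R1 → x ∈ N := by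
        intro x hx hx1
        obtain ⟨a, ha, b, hb, rfl⟩ := (hmemQ x).mp hx
        have ha1 : a ∈ G.R1 := by
          have : (a + b) - b ∈ G.R1 := G.R1.sub_mem hx1 (hNR1 hb)
          simpa using this
        have : a = 0 := G.eq_zero_of_mem_both (hresR0 a ha) ha1
        simpa [this] using hb
      refine ⟨hQ, ?_, ?_⟩
      · intro hTop
        have h1 : (1 : R) ∈ G.residual N := hQ0 1 (hTop ▸ Submodule.mem_top) G.one_mem
        apply hNne
        refine Set.Subset.antisymm hNR1 ?_
        intro r hr
        have := h1.2 r hr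
        simpa using this
      · rintro r hr s hs hrs
        rcases hr with hr0 | hr1
        · rcases hs with hs0 | hs1
          · -- r, s ∈ R0
            have hrsres : r * s ∈ G.residual N := hQ0 _ hrs (G.mul_mem_00 hr0 hs0)
            by_contra hcon
            push_neg at hcon
            obtain ⟨hrQ, hsQ⟩ := hcon
            have hrres : r ∉ G.residual N := fun h => hrQ (hresQ r h)
            have : ¬ ∀ m ∈ G.R1, r * m ∈ N := fun h => hrres ⟨hr0, h⟩
            push_neg at this
            obtain ⟨m, hm1, hrmN⟩ := this
            have h1 : s * (r * m) ∈ N := by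
              have : (r * s) * m ∈ N := hrsres.2 m hm1
              rwa [show s * (r * m) = (r * s) * m by ring]
            rcases hNprime s hs0 (r * m) (G.mul_mem_01 hr0 hm1) h1 with h | h
            · exact hsQ (hresQ s h)
            · exact hrmN h
          · -- r ∈ R0, s ∈ R1
            have : r * s ∈ N := hQ1 _ hrs (G.mul_mem_01 hr0 hs1)
            rcases hNprime r hr0 s hs1 this with h | h
            · exact Or.inl (hresQ r h)
            · exact Or.inr (hNQ s h)
        · rcases hs with hs0 | hs1
          · -- r ∈ R1, s ∈ R0
            have : s * r ∈ N := hQ1 _ (by rwa [mul_comm] at hrs) (G.mul_mem_01 hs0 hr1)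
            rcases hNprime s hs0 r hr1 this with h | h
            · exact Or.inr (hresQ s h)
            · exact Or.inl (hNQ r h)
          · -- r, s ∈ R1
            have hrsres : r * s ∈ G.residual N := hQ0 _ hrs (G.mul_mem_11 hr1 hs1)
            by_contra hcon
            push_neg at hcon
            obtain ⟨hrQ, hsQ⟩ := hcon
            have hrN : r ∉ N := fun h => hrQ (hNQ r h)
            have hsN : s ∉ N := fun h => hsQ (hNQ s h)
            have step1 : ∀ m ∈ G.R1, s * m ∈ G.residual N := by
              intro m hm
              have h1 : (s * m) * r ∈ N := by
                have : (r * s) * m ∈ N := hrsres.2 m hm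
                rwa [show (s * m) * r = (r * s) * m by ring]
              rcases hNprime (s * m) (G.mul_mem_11 hs1 hm) r hr1 h1 with h | h
              · exact h
              · exact absurd h hrN
            have step2 : ∀ m ∈ G.R1, ∀ m' ∈ G.R1, m * m' ∈ G.residual N := by
              intro m hm m' hm'
              have h1 : (m * m') * s ∈ N := by
                have : (s * m) * m' ∈ N := (step1 m hm).2 m' hm'
                rwa [show (m * m') * s = (s * m) * m' by ring]
              rcases hNprime (m * m') (G.mul_mem_11 hm hm') s hs1 h1 with h | h
              · exact h
              · exact absurd h hsN
            have hsqres : G.sq ≤ G.residual N := by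
              apply (AddSubgroup.closure_le _).mpr
              rintro x ⟨a, ha, b, hb, rfl⟩
              exact step2 a ha b hb
            have : G.cube ≤ N := by
              apply (AddSubgroup.closure_le _).mpr
              rintro x ⟨a, ha, b, hb, rfl⟩
              exact (hsqres ha).2 b hb
            exact hcube fun x hx => this hx
end

section
/- Let R = R₀ ⊕ R₁ be a Z₂-graded commutative ring and p a prime ideal of R₀ with R₁² ⊄ p. Then (p·R₁ :_{R₀} R₁) = p. -/
/-- if `p` is a prime ideal of `R₀` with `R₁² ⊄ p`, then
`(p·R₁ :_{R₀} R₁) = p`. -/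
theorem residual_smul_eq {R : Type*} [CommRing R] (G : Z2Grading R) (p : AddSubgroup R)
    (hp : G.IsPrime0 p) (h : ¬ ((G.sq : Set R) ⊆ ↑p)) :
    G.residual (mulSet (↑p) (↑G.R1)) = p := by
  -- find x y ∈ R₁ with x*y ∉ p
  obtain ⟨x, hx, y, hy, hxy⟩ : ∃ x ∈ G.R1, ∃ y ∈ G.R1, x * y ∉ p := by
    by_contra hc
    push_neg at hc
    apply h
    refine (AddSubgroup.closure_le p).2 ?_
    rintro z ⟨a, ha, b, hb, rfl⟩
    exact hc a ha b hb
  -- key: (p·R₁)·R₁ ⊆ p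
  have key : ∀ z ∈ mulSet (↑p) (↑G.R1), ∀ r ∈ G.R1, z * r ∈ p := by
    intro z hz r hr
    have : mulSet (↑p) (↑G.R1) ≤ p.comap (AddMonoidHom.mulRight r) := by
      refine (AddSubgroup.closure_le _).2 ?_
      rintro w ⟨a, ha, b, hb, rfl⟩
      show a * b * r ∈ p
      have hbr : b * r ∈ G.R0 := G.mul_mem_11 hb hr
      have h2 := hp.1.2 (b * r) hbr a ha
      rwa [show b * r * a = a * b * r by ring] at h2
    exact this hz
  ext a
  constructor
  · rintro ⟨ha0, ha⟩
    have hax : a * x ∈ mulSet (↑p) (↑G.R1) := ha x hx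
    have : a * (x * y) ∈ p := by
      have := key _ hax y hy
      rwa [mul_assoc] at this
    rcases hp.2.2 a ha0 (x * y) (G.mul_mem_11 hx hy) this with h' | h'
    · exact h'
    · exact absurd h' hxy
  · intro ha
    refine ⟨hp.1.1 ha, fun r hr => ?_⟩
    exact AddSubgroup.subset_closure ⟨a, ha, r, hr, rfl⟩
end

section
/- Let R = R₀ ⊕ R₁ be a Z₂-graded commutative ring and Q a Z₂-graded ideal of R such that R₁² + (Q ∩ R₀) = R₀. Then Q is a Z₂-graded prime ideal of R if and only if Q = p + p·R₁ where p is a prime ideal of R₀. -/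
section AuxZ2
variable {R : Type*} [CommRing R] (G : Z2Grading R)

lemma aux_zero_of_mem_both {x : R} (h0 : x ∈ G.R0) (h1 : x ∈ G.R1) : x = 0 := by
  have : x ∈ G.R0 ⊓ G.R1 := ⟨h0, h1⟩
  rw [G.inf_eq_bot] at this
  exact this

lemma aux_mulSet_le_R1 {p : AddSubgroup R} (hp : (p : Set R) ⊆ ↑G.R0) :
    mulSet (p : Set R) (G.R1 : Set R) ≤ G.R1 := by
  apply (AddSubgroup.closure_le _).2
  rintro x ⟨a, ha, b, hb, rfl⟩
  exact G.mul_mem_01 (hp ha) hb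

/-- Lemma B: multiplying an element of `p·R₁` by an element of `R₁` lands in `p`. -/
lemma aux_R1_mul_mulSet_mem {p : AddSubgroup R} (hp : G.IsIdeal0 p)
    {t x : R} (ht : t ∈ G.R1) (hx : x ∈ mulSet (p : Set R) (G.R1 : Set R)) :
    t * x ∈ p := by
  induction hx using AddSubgroup.closure_induction with
  | mem y hy =>
    obtain ⟨a, ha, b, hb, rfl⟩ := hy
    have h : t * (a * b) = (t * b) * a := by ring
    rw [h]
    exact hp.2 _ (G.mul_mem_11 ht hb) _ ha
  | zero => simpa using p.zero_mem
  | add x y _ _ hx hy => rw [mul_add]; exact p.add_mem hx hy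
  | neg x _ hx => rw [mul_neg]; exact p.neg_mem hx

/-- Lemma A: if `s ∈ R₁` with `R₁·s ⊆ p` and `1 = σ + q`, `σ ∈ R₁²`, `q ∈ p`,
then `s ∈ p·R₁`. -/
lemma aux_mem_mulSet_of_annih {p : AddSubgroup R} {σ q s : R}
    (hσ : σ ∈ G.sq) (hq : q ∈ p) (h1 : (1 : R) = σ + q) (hs : s ∈ G.R1)
    (hann : ∀ t ∈ G.R1, t * s ∈ p) :
    s ∈ mulSet (p : Set R) (G.R1 : Set R) := by
  have key : ∀ x ∈ G.sq, x * s ∈ mulSet (p : Set R) (G.R1 : Set R) := by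
    intro x hx
    induction hx using AddSubgroup.closure_induction with
    | mem y hy =>
      obtain ⟨a, ha, b, hb, rfl⟩ := hy
      exact AddSubgroup.subset_closure ⟨b * s, hann b hb, a, ha, by ring⟩
    | zero => simpa using (mulSet (p : Set R) (G.R1 : Set R)).zero_mem
    | add x y _ _ hx hy =>
      rw [add_mul]; exact AddSubgroup.add_mem _ hx hy
    | neg x _ hx => rw [neg_mul]; exact AddSubgroup.neg_mem _ hx
  have hσs : σ * s ∈ mulSet (p : Set R) (G.R1 : Set R) := key σ hσ
  have hdec : s = σ * s + q * s := by
    calc s = 1 * s := (one_mul s).symm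
    _ = σ * s + q * s := by rw [h1, add_mul]
  rw [hdec]
  exact AddSubgroup.add_mem _ hσs (AddSubgroup.subset_closure ⟨q, hq, s, hs, rfl⟩)

/-- `Q ∩ R₀` as an additive subgroup. -/
def auxCap (Q : Ideal R) : AddSubgroup R where
  carrier := {x : R | x ∈ Q ∧ x ∈ G.R0}
  zero_mem' := ⟨Q.zero_mem, G.R0.zero_mem⟩
  add_mem' := fun hx hy => ⟨Q.add_mem hx.1 hy.1, G.R0.add_mem hx.2 hy.2⟩
  neg_mem' := fun hx => ⟨Q.neg_mem hx.1, G.R0.neg_mem hx.2⟩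

lemma aux_mem_cap {Q : Ideal R} {x : R} : x ∈ auxCap G Q ↔ x ∈ Q ∧ x ∈ G.R0 := Iff.rfl

end AuxZ2

/-- if `Q` is a `ℤ₂`-graded ideal with `R₁² + (Q ∩ R₀) = R₀`, then `Q` is
`ℤ₂`-graded prime iff `Q = p + p·R₁` for a prime ideal `p` of `R₀`. -/
theorem graded_prime_iff_of_comaximal {R : Type*} [CommRing R] (G : Z2Grading R)
    (Q : Ideal R) (hQ : G.IsGradedIdeal Q)
    (hco : setSum (↑G.sq) ((Q : Set R) ∩ ↑G.R0) = (↑G.R0 : Set R)) :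
    G.IsGradedPrime Q ↔
      ∃ p : AddSubgroup R, G.IsPrime0 p ∧
        (Q : Set R) = setSum ↑p (mulSet (p : Set R) (G.R1 : Set R) : Set R) := by
  obtain ⟨σ, hσ, q, hqmem, h1⟩ :
      ∃ a ∈ (G.sq : Set R), ∃ b ∈ ((Q : Set R) ∩ ↑G.R0), (1 : R) = a + b := by
    have h : (1 : R) ∈ (G.R0 : Set R) := G.one_mem
    rw [← hco] at h
    exact h
  have hq1 : q ∈ Q := hqmem.1
  have hq0 : q ∈ G.R0 := hqmem.2
  constructor
  · rintro ⟨-, hne, hprime⟩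
    refine ⟨auxCap G Q, ⟨⟨fun x hx => hx.2, fun a ha x hx =>
      ⟨Q.mul_mem_left a hx.1, G.mul_mem_00 ha hx.2⟩⟩, ?_, ?_⟩, ?_⟩
    · intro h
      have h1' : (1 : R) ∈ auxCap G Q := by
        have h2 : (1 : R) ∈ ((auxCap G Q : AddSubgroup R) : Set R) :=
          h.symm ▸ (G.one_mem : (1 : R) ∈ (G.R0 : Set R))
        exact h2
      exact hne (Ideal.eq_top_of_isUnit_mem Q h1'.1 isUnit_one)
    · intro a ha b hb hab
      rcases hprime a (Or.inl ha) b (Or.inl hb) hab.1 with h | h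
      · exact Or.inl ⟨h, ha⟩
      · exact Or.inr ⟨h, hb⟩
    · ext x
      constructor
      · intro hx
        obtain ⟨a, b, ha0, hb1, haQ, hbQ, rfl⟩ := hQ x hx
        refine ⟨a, ⟨haQ, ha0⟩, b, ?_, rfl⟩
        exact aux_mem_mulSet_of_annih G hσ ⟨hq1, hq0⟩ h1 hb1
          (fun t ht => ⟨Q.mul_mem_left t hbQ, G.mul_mem_11 ht hb1⟩)
      · rintro ⟨a, ha, b, hb, rfl⟩
        have hle : mulSet ((auxCap G Q : Set R)) (G.R1 : Set R) ≤ Q.toAddSubgroup := by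
          apply (AddSubgroup.closure_le _).2
          rintro x ⟨c, hc, r, hr, rfl⟩
          exact Ideal.mul_mem_right r Q hc.1
        exact Q.add_mem ha.1 (hle hb)
  · rintro ⟨p, ⟨⟨hpsub, hpmul⟩, hpne, hpprime⟩, hQeq⟩
    have hmem : ∀ x : R, x ∈ Q ↔ ∃ a ∈ p, ∃ b ∈ mulSet (p : Set R) (G.R1 : Set R), x = a + b := by
      intro x
      rw [show (x ∈ Q) = (x ∈ (Q : Set R)) from rfl, hQeq]
      rfl
    have hpQ : ∀ a ∈ p, a ∈ Q := fun a ha =>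
      (hmem a).2 ⟨a, ha, 0, AddSubgroup.zero_mem _, (add_zero a).symm⟩
    have hmulQ : ∀ b ∈ mulSet (p : Set R) (G.R1 : Set R), b ∈ Q := fun b hb =>
      (hmem b).2 ⟨0, p.zero_mem, b, hb, (zero_add b).symm⟩
    have hcap0 : ∀ x : R, x ∈ Q → x ∈ G.R0 → x ∈ p := by
      intro x hxQ hx0
      obtain ⟨a, ha, b, hb, rfl⟩ := (hmem x).1 hxQ
      have hb1 : b ∈ G.R1 := aux_mulSet_le_R1 G hpsub hb
      have hb0 : b ∈ G.R0 := by
        have := G.R0.sub_mem hx0 (hpsub ha)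
        simpa using this
      have : b = 0 := aux_zero_of_mem_both G hb0 hb1
      simpa [this] using ha
    have hcap1 : ∀ x : R, x ∈ Q → x ∈ G.R1 →
        x ∈ mulSet (p : Set R) (G.R1 : Set R) := by
      intro x hxQ hx1
      obtain ⟨a, ha, b, hb, rfl⟩ := (hmem x).1 hxQ
      have hb1 : b ∈ G.R1 := aux_mulSet_le_R1 G hpsub hb
      have ha1 : a ∈ G.R1 := by
        have := G.R1.sub_mem hx1 hb1
        simpa using this
      have : a = 0 := aux_zero_of_mem_both G (hpsub ha) ha1
      simpa [this] using hb
    have hqp : q ∈ p := hcap0 q hq1 hq0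
    have hIdeal : G.IsIdeal0 p := ⟨hpsub, hpmul⟩
    -- a homogeneous element of R1 annihilated by R1 into p lies in Q
    have hannQ : ∀ s ∈ G.R1, (∀ t ∈ G.R1, t * s ∈ p) → s ∈ Q := fun s hs hann =>
      hmulQ s (aux_mem_mulSet_of_annih G hσ hqp h1 hs hann)
    refine ⟨hQ, ?_, ?_⟩
    · intro htop
      have h1Q : (1 : R) ∈ Q := htop ▸ Submodule.mem_top
      have h1p : (1 : R) ∈ p := hcap0 1 h1Q G.one_mem
      apply hpne
      ext x
      constructor
      · intro hx; exact hpsub hx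
      · intro hx
        have := hpmul x hx 1 h1p
        simpa using this
    · intro r hr s hs hrs
      rcases hr with hr0 | hr1
      · rcases hs with hs0 | hs1
        · -- both in R0
          have : r * s ∈ p := hcap0 _ hrs (G.mul_mem_00 hr0 hs0)
          rcases hpprime r hr0 s hs0 this with h | h
          · exact Or.inl (hpQ r h)
          · exact Or.inr (hpQ s h)
        · -- r ∈ R0, s ∈ R1
          by_cases hrp : r ∈ p
          · exact Or.inl (hpQ r hrp)
          · refine Or.inr (hannQ s hs1 ?_)
            intro t ht
            have hmul : r * s ∈ mulSet (p : Set R) (G.R1 : Set R) :=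
              hcap1 _ hrs (G.mul_mem_01 hr0 hs1)
            have h2 : t * (r * s) ∈ p := aux_R1_mul_mulSet_mem G hIdeal ht hmul
            have h3 : r * (t * s) ∈ p := by
              have : r * (t * s) = t * (r * s) := by ring
              rw [this]; exact h2
            rcases hpprime r hr0 (t * s) (G.mul_mem_11 ht hs1) h3 with h | h
            · exact absurd h hrp
            · exact h
      · rcases hs with hs0 | hs1
        · -- r ∈ R1, s ∈ R0
          by_cases hsp : s ∈ p
          · exact Or.inr (hpQ s hsp)
          · refine Or.inl (hannQ r hr1 ?_)
            intro t ht
            have hmul : r * s ∈ mulSet (p : Set R) (G.R1 : Set R) :=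
              hcap1 _ hrs (by simpa [mul_comm] using G.mul_mem_01 hs0 hr1)
            have h2 : t * (r * s) ∈ p := aux_R1_mul_mulSet_mem G hIdeal ht hmul
            have h3 : s * (t * r) ∈ p := by
              have : s * (t * r) = t * (r * s) := by ring
              rw [this]; exact h2
            rcases hpprime s hs0 (t * r) (G.mul_mem_11 ht hr1) h3 with h | h
            · exact absurd h hsp
            · exact h
        · -- both in R1
          have hrsp : r * s ∈ p := hcap0 _ hrs (G.mul_mem_11 hr1 hs1)
          by_cases hall : ∀ t ∈ G.R1, t * r ∈ p
          · exact Or.inl (hannQ r hr1 hall)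
          · push_neg at hall
            obtain ⟨t, ht, htr⟩ := hall
            refine Or.inr (hannQ s hs1 ?_)
            intro u hu
            have h4 : (t * r) * (u * s) ∈ p := by
              have : (t * r) * (u * s) = (t * u) * (r * s) := by ring
              rw [this]
              exact hpmul _ (G.mul_mem_11 ht hu) _ hrsp
            rcases hpprime (t * r) (G.mul_mem_11 ht hr1) (u * s)
              (G.mul_mem_11 hu hs1) h4 with h | h
            · exact absurd h htr
            · exact h
end

section
/- Let R = R₀ ⊕ R₁ be a strongly Z₂-graded commutative ring (i.e. R₁² = R₀). Then the Z₂-graded prime ideals of R are exactly the sets p + p·R₁ where p ranges over the prime ideals of R₀. -/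
namespace Z2Gaux
open Z2Grading
variable {R : Type*} [CommRing R] (G : Z2Grading R)

lemma mem_both {x : R} (h0 : x ∈ G.R0) (h1 : x ∈ G.R1) : x = 0 := by
  have : x ∈ G.R0 ⊓ G.R1 := ⟨h0, h1⟩
  rw [G.inf_eq_bot] at this
  simpa using this

lemma mulSet_sub_R1 {p : AddSubgroup R} (hp : (p : Set R) ⊆ ↑G.R0) :
    ∀ x ∈ mulSet (p : Set R) (G.R1 : Set R), x ∈ G.R1 := by
  intro x hx
  refine (AddSubgroup.closure_le G.R1).2 ?_ hx
  rintro y ⟨a, ha, m, hm, rfl⟩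
  exact G.mul_mem_01 (hp ha) hm

lemma mul_R1_mem {p : AddSubgroup R} (hp : (p : Set R) ⊆ ↑G.R0)
    (hpI : ∀ a ∈ G.R0, ∀ x ∈ p, a * x ∈ p)
    {y : R} (hy : y ∈ G.R1) {x : R} (hx : x ∈ mulSet (p : Set R) (G.R1 : Set R)) :
    y * x ∈ p := by
  induction hx using AddSubgroup.closure_induction with
  | mem z hz =>
    obtain ⟨a, ha, m, hm, rfl⟩ := hz
    have : y * (a * m) = (y * m) * a := by ring
    rw [this]
    exact hpI _ (G.mul_mem_11 hy hm) _ ha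
  | zero => simpa using p.zero_mem
  | add a b _ _ pa pb => rw [mul_add]; exact p.add_mem pa pb
  | neg a _ pa => rw [mul_neg]; exact p.neg_mem pa

lemma mem_mulSet_of_forall (hstr : (G.sq : Set R) = ↑G.R0)
    {p : AddSubgroup R} {s : R} (hs : ∀ y ∈ G.R1, y * s ∈ p) :
    s ∈ mulSet (p : Set R) (G.R1 : Set R) := by
  have h1 : (1 : R) ∈ G.sq := by
    show (1 : R) ∈ (G.sq : Set R); rw [hstr]; exact G.one_mem
  have key : ∀ c ∈ G.sq, c * s ∈ mulSet (p : Set R) (G.R1 : Set R) := by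
    intro c hc
    induction hc using AddSubgroup.closure_induction with
    | mem z hz =>
      obtain ⟨x, hx, y, hy, rfl⟩ := hz
      have : x * y * s = (y * s) * x := by ring
      rw [this]
      exact AddSubgroup.subset_closure ⟨y * s, hs y hy, x, hx, rfl⟩
    | zero => simpa using (mulSet (p : Set R) (G.R1 : Set R)).zero_mem
    | add a b _ _ pa pb => rw [add_mul]; exact AddSubgroup.add_mem _ pa pb
    | neg a _ pa => rw [neg_mul]; exact AddSubgroup.neg_mem _ pa
  simpa using key 1 h1

end Z2Gaux

/-- if `R` is strongly `ℤ₂`-graded (`R₁² = R₀`) then the `ℤ₂`-graded prime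
ideals of `R` are exactly the sets `p + p·R₁` with `p` a prime ideal of `R₀`. -/


theorem graded_primes_of_strongly_graded {R : Type*} [CommRing R] (G : Z2Grading R)
    (hstr : (G.sq : Set R) = ↑G.R0) (Q : Ideal R) :
    G.IsGradedPrime Q ↔
      ∃ p : AddSubgroup R, G.IsPrime0 p ∧
        (Q : Set R) = setSum ↑p (mulSet (p : Set R) (G.R1 : Set R) : Set R) := by

  classical
  constructor
  · rintro ⟨hgr, hne, hpr⟩
    set p : AddSubgroup R := Submodule.toAddSubgroup Q ⊓ G.R0 with hp_def
    have hp_mem : ∀ x : R, x ∈ p ↔ x ∈ Q ∧ x ∈ G.R0 := by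
      intro x; simp [hp_def, AddSubgroup.mem_inf]
    have hp0 : (p : Set R) ⊆ ↑G.R0 := fun x hx => ((hp_mem x).1 hx).2
    have hpI : ∀ a ∈ G.R0, ∀ x ∈ p, a * x ∈ p := by
      intro a ha x hx
      obtain ⟨hxQ, hx0⟩ := (hp_mem x).1 hx
      exact (hp_mem _).2 ⟨Ideal.mul_mem_left Q a hxQ, G.mul_mem_00 ha hx0⟩
    refine ⟨p, ⟨⟨hp0, hpI⟩, ?_, ?_⟩, ?_⟩
    · intro h
      apply hne
      have h1 : (1 : R) ∈ p := by rw [← SetLike.mem_coe, h]; exact G.one_mem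
      exact Ideal.eq_top_of_isUnit_mem Q ((hp_mem 1).1 h1).1 isUnit_one
    · intro a ha b hb hab
      have habQ : a * b ∈ Q := ((hp_mem _).1 hab).1
      rcases hpr a (Or.inl ha) b (Or.inl hb) habQ with h | h
      · exact Or.inl ((hp_mem a).2 ⟨h, ha⟩)
      · exact Or.inr ((hp_mem b).2 ⟨h, hb⟩)
    · ext x
      constructor
      · intro hx
        obtain ⟨a, b, ha0, hb1, haQ, hbQ, rfl⟩ := hgr x hx
        refine ⟨a, (hp_mem a).2 ⟨haQ, ha0⟩, b, ?_, rfl⟩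
        exact Z2Gaux.mem_mulSet_of_forall G hstr (fun y hy =>
          (hp_mem _).2 ⟨Ideal.mul_mem_left Q y hbQ, G.mul_mem_11 hy hb1⟩)
      · rintro ⟨a, ha, b, hb, rfl⟩
        have haQ : a ∈ Q := ((hp_mem a).1 ha).1
        have hbQ : b ∈ Q := by
          have : mulSet (p : Set R) (G.R1 : Set R) ≤ Submodule.toAddSubgroup Q := by
            refine (AddSubgroup.closure_le _).2 ?_
            rintro z ⟨c, hc, m, hm, rfl⟩
            exact Ideal.mul_mem_right m Q ((hp_mem c).1 hc).1
          exact this hb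
        exact Q.add_mem haQ hbQ
  · rintro ⟨p, ⟨⟨hp0, hpI⟩, hpne, hppr⟩, hQ⟩
    have hmemQ : ∀ x : R, x ∈ Q ↔
        ∃ a ∈ p, ∃ b ∈ mulSet (p : Set R) (G.R1 : Set R), x = a + b := by
      intro x
      constructor
      · intro hx
        have : x ∈ (Q : Set R) := hx
        rw [hQ] at this; exact this
      · intro hx
        show x ∈ (Q : Set R)
        rw [hQ]; exact hx
    have hM1 : ∀ x ∈ mulSet (p : Set R) (G.R1 : Set R), x ∈ G.R1 :=
      Z2Gaux.mulSet_sub_R1 G hp0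
    have hpQ : ∀ a ∈ p, a ∈ Q := fun a ha =>
      (hmemQ a).2 ⟨a, ha, 0, AddSubgroup.zero_mem _, (add_zero a).symm⟩
    have hMQ : ∀ b ∈ mulSet (p : Set R) (G.R1 : Set R), b ∈ Q := fun b hb =>
      (hmemQ b).2 ⟨0, p.zero_mem, b, hb, (zero_add b).symm⟩
    have hQ0 : ∀ x ∈ Q, x ∈ G.R0 → x ∈ p := by
      intro x hx hx0
      obtain ⟨a, ha, b, hb, rfl⟩ := (hmemQ _).1 hx
      have hb0 : b = 0 := Z2Gaux.mem_both G
        (by have := G.R0.sub_mem hx0 (hp0 ha); simpa using this) (hM1 b hb)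
      simpa [hb0] using ha
    have hQ1 : ∀ x ∈ Q, x ∈ G.R1 → x ∈ mulSet (p : Set R) (G.R1 : Set R) := by
      intro x hx hx1
      obtain ⟨a, ha, b, hb, rfl⟩ := (hmemQ _).1 hx
      have ha0 : a = 0 := Z2Gaux.mem_both G (hp0 ha)
        (by have := G.R1.sub_mem hx1 (hM1 b hb); simpa using this)
      simpa [ha0] using hb
    have hnotp1 : (1 : R) ∉ p := by
      intro h1
      apply hpne
      apply Set.Subset.antisymm hp0
      intro a ha
      simpa using hpI a ha 1 h1
    refine ⟨?_, ?_, ?_⟩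
    · intro x hx
      obtain ⟨a, ha, b, hb, rfl⟩ := (hmemQ _).1 hx
      exact ⟨a, b, hp0 ha, hM1 b hb, hpQ a ha, hMQ b hb, rfl⟩
    · intro h
      exact hnotp1 (hQ0 1 (h ▸ Submodule.mem_top) G.one_mem)
    · intro r hr s hs hrs
      rcases hr with hr0 | hr1
      · rcases hs with hs0 | hs1
        · have : r * s ∈ p := hQ0 _ hrs (G.mul_mem_00 hr0 hs0)
          rcases hppr r hr0 s hs0 this with h | h
          · exact Or.inl (hpQ r h)
          · exact Or.inr (hpQ s h)
        · by_cases hrp : r ∈ p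
          · exact Or.inl (hpQ r hrp)
          · refine Or.inr (hMQ s ?_)
            apply Z2Gaux.mem_mulSet_of_forall G hstr
            intro y hy
            have hrsM : r * s ∈ mulSet (p : Set R) (G.R1 : Set R) :=
              hQ1 _ hrs (G.mul_mem_01 hr0 hs1)
            have : r * (y * s) ∈ p := by
              have := Z2Gaux.mul_R1_mem G hp0 hpI hy hrsM
              have e : y * (r * s) = r * (y * s) := by ring
              rwa [e] at this
            rcases hppr r hr0 (y * s) (G.mul_mem_11 hy hs1) this with h | h
            · exact absurd h hrp
            · exact h
      · rcases hs with hs0 | hs1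
        · by_cases hsp : s ∈ p
          · exact Or.inr (hpQ s hsp)
          · refine Or.inl (hMQ r ?_)
            apply Z2Gaux.mem_mulSet_of_forall G hstr
            intro y hy
            have hrsM : r * s ∈ mulSet (p : Set R) (G.R1 : Set R) :=
              hQ1 _ hrs (by rw [mul_comm]; exact G.mul_mem_01 hs0 hr1)
            have : s * (y * r) ∈ p := by
              have := Z2Gaux.mul_R1_mem G hp0 hpI hy hrsM
              have e : y * (r * s) = s * (y * r) := by ring
              rwa [e] at this
            rcases hppr s hs0 (y * r) (G.mul_mem_11 hy hr1) this with h | h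
            · exact absurd h hsp
            · exact h
        · by_cases hrQ : r ∈ Q
          · exact Or.inl hrQ
          · refine Or.inr (hMQ s ?_)
            apply Z2Gaux.mem_mulSet_of_forall G hstr
            intro z hz
            have hrsp : r * s ∈ p := hQ0 _ hrs (G.mul_mem_11 hr1 hs1)
            have hyr : ∃ y ∈ G.R1, y * r ∉ p := by
              by_contra h
              push_neg at h
              exact hrQ (hMQ r (Z2Gaux.mem_mulSet_of_forall G hstr
                (fun y hy => h y hy)))
            obtain ⟨y, hy, hyrp⟩ := hyr
            have hprod : (y * r) * (z * s) ∈ p := by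
              have e : (y * r) * (z * s) = (y * z) * (r * s) := by ring
              rw [e]
              exact hpI _ (G.mul_mem_11 hy hz) _ hrsp
            rcases hppr (y * r) (G.mul_mem_11 hy hr1) (z * s) (G.mul_mem_11 hz hs1) hprod with h | h
            · exact absurd h hyrp
            · exact h
end

section
/- Let R = R₀ ⊕ R₁ be a Z₂-graded commutative ring such that R₁² is contained in the nilradical of R₀. Then an ideal of R is a Z₂-graded prime ideal if and only if it is a prime ideal of R; moreover these are exactly the ideals p + R₁ with p a prime ideal of R₀. -/
namespace Z2Grading

variable {R : Type*} [CommRing R] (G : Z2Grading R)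

lemma decomp' (x : R) : ∃ a ∈ G.R0, ∃ b ∈ G.R1, x = a + b := by
  have hx : x ∈ G.R0 ⊔ G.R1 := by rw [G.sup_eq_top]; trivial
  rw [AddSubgroup.mem_sup] at hx
  obtain ⟨a, ha, b, hb, h⟩ := hx
  exact ⟨a, ha, b, hb, h.symm⟩

lemma mul_homog {r s : R} (hr : r ∈ G.homogeneous) (hs : s ∈ G.homogeneous) :
    r * s ∈ G.homogeneous := by
  rcases hr with hr | hr <;> rcases hs with hs | hs
  · exact Or.inl (G.mul_mem_00 hr hs)
  · exact Or.inr (G.mul_mem_01 hr hs)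
  · exact Or.inr (by rw [mul_comm]; exact G.mul_mem_01 hs hr)
  · exact Or.inl (G.mul_mem_11 hr hs)

lemma pow_homog {r : R} (hr : r ∈ G.homogeneous) (n : ℕ) : r ^ n ∈ G.homogeneous := by
  induction n with
  | zero => rw [pow_zero]; exact Or.inl G.one_mem
  | succ n ih => rw [pow_succ]; exact G.mul_homog ih hr

lemma nilpotent_of_mul_mem_R1 (hnil : ∀ x ∈ G.sq, IsNilpotent x) {r s : R}
    (hr : r ∈ G.R1) (hs : s ∈ G.R1) : IsNilpotent (r * s) :=
  hnil _ (AddSubgroup.subset_closure ⟨r, hr, s, hs, rfl⟩)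

lemma nilpotent_of_mem_R1 (hnil : ∀ x ∈ G.sq, IsNilpotent x) {r : R}
    (hr : r ∈ G.R1) : IsNilpotent r := by
  obtain ⟨n, hn⟩ := G.nilpotent_of_mul_mem_R1 hnil hr hr
  exact ⟨2 * n, by rw [pow_mul, pow_two]; exact hn⟩

lemma mem_of_pow_mem {Q : Ideal R} (hQ : G.IsGradedPrime Q) {r : R}
    (hr : r ∈ G.homogeneous) : ∀ n, r ^ n ∈ Q → r ∈ Q := by
  intro n
  induction n with
  | zero =>
    intro h
    rw [pow_zero] at h
    exact absurd ((Ideal.eq_top_iff_one Q).mpr h) hQ.2.1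
  | succ n ih =>
    intro h
    rw [pow_succ] at h
    rcases hQ.2.2 _ (G.pow_homog hr n) _ hr h with h' | h'
    · exact ih h'
    · exact h'

lemma mem_of_homog_nilpotent {Q : Ideal R} (hQ : G.IsGradedPrime Q) {r : R}
    (hr : r ∈ G.homogeneous) (h : IsNilpotent r) : r ∈ Q := by
  obtain ⟨n, hn⟩ := h
  exact G.mem_of_pow_mem hQ hr n (hn ▸ Q.zero_mem)

lemma R1_le_of_gradedPrime (hnil : ∀ x ∈ G.sq, IsNilpotent x) {Q : Ideal R}
    (hQ : G.IsGradedPrime Q) {r : R} (hr : r ∈ G.R1) : r ∈ Q :=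
  G.mem_of_homog_nilpotent hQ (Or.inr hr) (G.nilpotent_of_mem_R1 hnil hr)

end Z2Grading

/-- if `R₁²` is contained in the nilradical of `R₀`, then an ideal of `R` is
`ℤ₂`-graded prime iff it is prime; moreover these are exactly the ideals `p + R₁` with `p`
a prime ideal of `R₀`. -/
theorem graded_prime_iff_prime_of_nil {R : Type*} [CommRing R] (G : Z2Grading R)
    (hnil : ∀ x ∈ G.sq, IsNilpotent x) (Q : Ideal R) :
    (G.IsGradedPrime Q ↔ Q.IsPrime) ∧
    (G.IsGradedPrime Q ↔
      ∃ p : AddSubgroup R, G.IsPrime0 p ∧ (Q : Set R) = setSum ↑p ↑G.R1) := by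
  constructor
  · constructor
    · -- graded prime → prime
      intro hQ
      refine ⟨hQ.2.1, ?_⟩
      intro x y hxy
      obtain ⟨a, ha, b, hb, rfl⟩ := G.decomp' x
      obtain ⟨c, hc, d, hd, rfl⟩ := G.decomp' y
      have hbQ : b ∈ Q := G.R1_le_of_gradedPrime hnil hQ hb
      have hdQ : d ∈ Q := G.R1_le_of_gradedPrime hnil hQ hd
      have hbd : b * d ∈ Q :=
        G.mem_of_homog_nilpotent hQ (Or.inl (G.mul_mem_11 hb hd))
          (G.nilpotent_of_mul_mem_R1 hnil hb hd)
      have had : a * d ∈ Q := G.R1_le_of_gradedPrime hnil hQ (G.mul_mem_01 ha hd)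
      have hbc : b * c ∈ Q := G.R1_le_of_gradedPrime hnil hQ
        (by rw [mul_comm]; exact G.mul_mem_01 hc hb)
      have hac : a * c ∈ Q := by
        have h : a * c = (a + b) * (c + d) - (a * d + b * c + b * d) := by ring
        rw [h]
        exact Q.sub_mem hxy (Q.add_mem (Q.add_mem had hbc) hbd)
      rcases hQ.2.2 a (Or.inl ha) c (Or.inl hc) hac with h' | h'
      · exact Or.inl (Q.add_mem h' hbQ)
      · exact Or.inr (Q.add_mem h' hdQ)
    · -- prime → graded prime
      intro hQ
      have hR1 : ∀ r ∈ G.R1, r ∈ Q := by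
        intro r hr
        obtain ⟨n, hn⟩ := G.nilpotent_of_mem_R1 hnil hr
        exact hQ.mem_of_pow_mem n (hn ▸ Q.zero_mem)
      refine ⟨?_, hQ.ne_top, fun r _ s _ h => hQ.mem_or_mem h⟩
      intro x hx
      obtain ⟨a, ha, b, hb, rfl⟩ := G.decomp' x
      have hbQ : b ∈ Q := hR1 b hb
      exact ⟨a, b, ha, hb, by simpa using Q.sub_mem hx hbQ, hbQ, rfl⟩
  · constructor
    · -- graded prime → ∃ p
      intro hQ
      refine ⟨G.R0 ⊓ Q.toAddSubgroup, ⟨⟨fun x hx => hx.1, ?_⟩, ?_, ?_⟩, ?_⟩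
      · intro a ha x hx
        exact ⟨G.mul_mem_00 ha hx.1, Ideal.mul_mem_left Q a hx.2⟩
      · intro h
        apply hQ.2.1
        rw [Ideal.eq_top_iff_one]
        have h1 : (1 : R) ∈ (G.R0 ⊓ Q.toAddSubgroup : AddSubgroup R) := by
          rw [← SetLike.mem_coe, h]; exact G.one_mem
        exact h1.2
      · intro a ha b hb hab
        rcases hQ.2.2 a (Or.inl ha) b (Or.inl hb) hab.2 with h' | h'
        · exact Or.inl ⟨ha, h'⟩
        · exact Or.inr ⟨hb, h'⟩
      · ext x
        constructor
        · intro hx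
          obtain ⟨a, b, ha, hb, haQ, hbQ, rfl⟩ := hQ.1 x hx
          exact ⟨a, ⟨ha, haQ⟩, b, hb, rfl⟩
        · rintro ⟨a, ha, b, hb, rfl⟩
          exact Q.add_mem ha.2 (G.R1_le_of_gradedPrime hnil hQ hb)
    · -- ∃ p → graded prime
      rintro ⟨p, hp, hset⟩
      have hpR0 : (p : Set R) ⊆ ↑G.R0 := hp.1.1
      have hpQ : ∀ a ∈ p, a ∈ Q := by
        intro a ha
        have : a ∈ (Q : Set R) := by
          rw [hset]; exact ⟨a, ha, 0, G.R1.zero_mem, by ring⟩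
        exact this
      have hR1Q : ∀ b ∈ G.R1, b ∈ Q := by
        intro b hb
        have : b ∈ (Q : Set R) := by
          rw [hset]; exact ⟨0, p.zero_mem, b, hb, by ring⟩
        exact this
      have hQ0p : ∀ x ∈ Q, x ∈ G.R0 → x ∈ p := by
        intro x hx hx0
        have : x ∈ (Q : Set R) := hx
        rw [hset] at this
        obtain ⟨a, ha, b, hb, rfl⟩ := this
        have hb0 : b = 0 := G.eq_zero_of_mem_both
          (by simpa using G.R0.sub_mem hx0 (hpR0 ha)) hb
        simpa [hb0] using ha
      refine ⟨?_, ?_, ?_⟩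
      · -- graded ideal
        intro x hx
        have hx' : x ∈ (Q : Set R) := hx
        rw [hset] at hx'
        obtain ⟨a, ha, b, hb, rfl⟩ := hx'
        exact ⟨a, b, hpR0 ha, hb, hpQ a ha, hR1Q b hb, rfl⟩
      · -- Q ≠ ⊤
        intro h
        have h1 : (1 : R) ∈ p := hQ0p 1 (h ▸ Submodule.mem_top) G.one_mem
        apply hp.2.1
        apply Set.Subset.antisymm hpR0
        intro a ha
        have := hp.1.2 a ha 1 h1
        simpa using this
      · -- homogeneous primality
        intro r hr s hs hrs
        rcases hr with hr | hr
        · rcases hs with hs | hs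
          · have : r * s ∈ p := hQ0p _ hrs (G.mul_mem_00 hr hs)
            rcases hp.2.2 r hr s hs this with h' | h'
            · exact Or.inl (hpQ r h')
            · exact Or.inr (hpQ s h')
          · exact Or.inr (hR1Q s hs)
        · exact Or.inl (hR1Q r hr)
end

section
/- Let G be an abelian group, R a G-graded commutative ring and I a G-graded ideal of R. Then the graded radical Grad(I) equals the intersection of all G-graded prime ideals of R containing I. -/
/-- for a `G`-graded commutative ring `R` (here graded by an abelian group
`ι`) and a `G`-graded ideal `I`, the graded radical `Grad(I)` equals the intersection of
all `G`-graded prime ideals of `R` containing `I`. -/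
theorem gradedRadical_eq_sInf {ι R : Type*} [AddCommGroup ι] [DecidableEq ι] [CommRing R]
    (𝒜 : ι → AddSubgroup R) [GradedRing 𝒜] (I : Ideal R) (hI : I.IsHomogeneous 𝒜) :
    {x : R | ∀ g : ι, (DirectSum.decompose 𝒜 x g : R) ∈ I.radical} =
      ⋂ P ∈ {P : Ideal R | P.IsHomogeneous 𝒜 ∧ P ≠ ⊤ ∧
        (∀ r s : R, SetLike.IsHomogeneousElem 𝒜 r → SetLike.IsHomogeneousElem 𝒜 s →
          r * s ∈ P → r ∈ P ∨ s ∈ P) ∧ I ≤ P}, (P : Set R) := by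
  classical
  ext x
  simp only [Set.mem_setOf_eq, Set.mem_iInter, SetLike.mem_coe]
  constructor
  · rintro hx P ⟨hPhom, hPne, hPprime, hIP⟩
    -- homogeneous elements of the radical lie in P
    have key : ∀ (n : ℕ) (r : R), SetLike.IsHomogeneousElem 𝒜 r → r ^ n ∈ P → r ∈ P := by
      intro n
      induction n with
      | zero =>
        intro r _ h
        exact absurd ((Ideal.eq_top_iff_one P).mpr (by simpa using h)) hPne
      | succ m ih =>
        intro r hr h
        obtain ⟨i, hi⟩ := hr
        rcases hPprime r (r ^ m) ⟨i, hi⟩ ⟨m • i, SetLike.pow_mem_graded m hi⟩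
            (by rwa [← pow_succ']) with h1 | h2
        · exact h1
        · exact ih r ⟨i, hi⟩ h2
    rw [← DirectSum.sum_support_decompose 𝒜 x]
    refine Ideal.sum_mem _ fun g _ => ?_
    obtain ⟨n, hn⟩ := hx g
    exact key n _ ⟨g, SetLike.coe_mem _⟩ (hIP hn)
  · intro hx g
    rw [Ideal.radical_eq_sInf]
    refine Submodule.mem_sInf.mpr ?_
    rintro p ⟨hIp, hp⟩
    set P : Ideal R := Ideal.span {y : R | y ∈ p ∧ SetLike.IsHomogeneousElem 𝒜 y} with hPdef
    have hPle : P ≤ p := Ideal.span_le.mpr fun y hy => hy.1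
    have hPhom : P.IsHomogeneous 𝒜 := Ideal.homogeneous_span 𝒜 _ fun y hy => hy.2
    have hxP : x ∈ P := by
      refine hx P ⟨hPhom, ?_, ?_, ?_⟩
      · intro h; exact hp.ne_top (top_unique (h ▸ hPle))
      · intro r s hr hs hrs
        rcases hp.mem_or_mem (hPle hrs) with h | h
        · exact Or.inl (Ideal.subset_span ⟨h, hr⟩)
        · exact Or.inr (Ideal.subset_span ⟨h, hs⟩)
      · intro z hz
        rw [← DirectSum.sum_support_decompose 𝒜 z]
        exact Ideal.sum_mem _ fun i _ =>
          Ideal.subset_span ⟨hIp (hI i hz), ⟨i, SetLike.coe_mem _⟩⟩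
    exact hPle (hPhom g hxP)
end

section
/- Let R = R₀ ⊕ R₁ be a Z₂-graded commutative ring and P a Z₂-graded prime ideal of R. Then P = p + R₁[p], where p = P ∩ R₀ and R₁[p] = {x ∈ R₁ : x² ∈ p}. -/
/-- if `P` is a `ℤ₂`-graded prime ideal of `R` and `p = P ∩ R₀`, then
`P = p + R₁[p]` where `R₁[p] = {x ∈ R₁ : x² ∈ p}`. -/
theorem graded_prime_eq_sum {R : Type*} [CommRing R] (G : Z2Grading R) (P : Ideal R)
    (hP : G.IsGradedPrime P) :
    (P : Set R) = setSum ((P : Set R) ∩ ↑G.R0)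
      {x : R | x ∈ G.R1 ∧ x * x ∈ (P : Set R) ∩ ↑G.R0} := by
  obtain ⟨hgr, hne, hpr⟩ := hP
  ext x
  constructor
  · intro hx
    obtain ⟨a, b, ha0, hb1, haP, hbP, hx_eq⟩ := hgr x hx
    exact ⟨a, ⟨haP, ha0⟩, b, ⟨hb1, P.mul_mem_left b hbP, G.mul_mem_11 hb1 hb1⟩, hx_eq⟩
  · rintro ⟨a, ⟨haP, _⟩, b, ⟨hb1, hbbP, _⟩, rfl⟩
    have hbP : b ∈ P := by
      rcases hpr b (Or.inr hb1) b (Or.inr hb1) hbbP with h | h <;> exact h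
    exact P.add_mem haP hbP
end
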